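/- Let f be a C² real function on an open subinterval of (0, ∞) and define u : ℝ⁴ × ℝ³ → ℝ by u(x, t) = ‖t‖ − f(‖x‖). Then at every point (x, t) with r := ‖x‖ > 0 in the domain of f and ‖t‖ > 0, the horizontal Laplacian of u equals Σᵢ₌₁⁴ ξᵢ(ξᵢu) = −f″(r) − 3f′(r)/r + 8r²/‖t‖. -/

import Mathlib

set_option maxHeartbeats 1000000

open Set

/-- The horizontal vector fields `ξ₁, ξ₂, ξ₃, ξ₄` of the quaternionic Heisenberg
group, on `ℝ⁷ ≃ ℝ⁴ × ℝ³` with coordinates `(x₁,x₂,x₃,x₄,t₁,t₂,t₃)`. -/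
noncomputable def xiVF : Fin 4 → (Fin 7 → ℝ) → (Fin 7 → ℝ)
  | 0 => fun p => ![1, 0, 0, 0, 2 * p 1, 2 * p 2, 2 * p 3]
  | 1 => fun p => ![0, 1, 0, 0, -2 * p 0, -2 * p 3, 2 * p 2]
  | 2 => fun p => ![0, 0, 1, 0, 2 * p 3, -2 * p 0, -2 * p 1]
  | 3 => fun p => ![0, 0, 0, 1, -2 * p 2, 2 * p 1, -2 * p 0]

/-- The directional derivative `ξᵢ u` of a function `u` along `ξᵢ`. -/
noncomputable def xiD (i : Fin 4) (u : (Fin 7 → ℝ) → ℝ) (p : Fin 7 → ℝ) : ℝ :=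
  fderiv ℝ u p (xiVF i p)

/-- The norm of the horizontal gradient, `|∇₀u| = (Σᵢ (ξᵢu)²)^{1/2}`. -/
noncomputable def hGradNorm (u : (Fin 7 → ℝ) → ℝ) (p : Fin 7 → ℝ) : ℝ :=
  Real.sqrt (∑ i : Fin 4, (xiD i u p) ^ 2)

/-- The horizontal mean curvature `H⁰ = Σᵢ ξᵢ(ξᵢu / |∇₀u|)` of the level
hypersurface of `u`. -/
noncomputable def hMeanCurv (u : (Fin 7 → ℝ) → ℝ) (p : Fin 7 → ℝ) : ℝ :=
  ∑ i : Fin 4, xiD i (fun q => xiD i u q / hGradNorm u q) p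

/-- The horizontal radius `‖x‖ = (x₁²+x₂²+x₃²+x₄²)^{1/2}`. -/
noncomputable def nx (p : Fin 7 → ℝ) : ℝ :=
  Real.sqrt (p 0 ^ 2 + p 1 ^ 2 + p 2 ^ 2 + p 3 ^ 2)

/-- The vertical radius `‖t‖ = (t₁²+t₂²+t₃²)^{1/2}`. -/
noncomputable def nt (p : Fin 7 → ℝ) : ℝ :=
  Real.sqrt (p 4 ^ 2 + p 5 ^ 2 + p 6 ^ 2)

noncomputable def P (i : Fin 7) : (Fin 7 → ℝ) →L[ℝ] ℝ := ContinuousLinearMap.proj i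
@[simp] lemma P_apply (i : Fin 7) (v : Fin 7 → ℝ) : P i v = v i := rfl

lemma hasFDerivAt_nx {q : Fin 7 → ℝ} (h : 0 < nx q) :
    HasFDerivAt nx ((nx q)⁻¹ • (q 0 • P 0 + q 1 • P 1 + q 2 • P 2 + q 3 • P 3)) q := by
  have hX : 0 < q 0 ^ 2 + q 1 ^ 2 + q 2 ^ 2 + q 3 ^ 2 := Real.sqrt_pos.mp h
  have hS : HasFDerivAt (fun q : Fin 7 → ℝ => q 0 ^ 2 + q 1 ^ 2 + q 2 ^ 2 + q 3 ^ 2)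
      ((2 * q 0) • P 0 + (2 * q 1) • P 1 + (2 * q 2) • P 2 + (2 * q 3) • P 3) q := by
    have h0 := (hasDerivAt_pow 2 (q 0)).comp_hasFDerivAt q (hasFDerivAt_apply (𝕜 := ℝ) 0 q)
    have h1 := (hasDerivAt_pow 2 (q 1)).comp_hasFDerivAt q (hasFDerivAt_apply (𝕜 := ℝ) 1 q)
    have h2 := (hasDerivAt_pow 2 (q 2)).comp_hasFDerivAt q (hasFDerivAt_apply (𝕜 := ℝ) 2 q)
    have h3 := (hasDerivAt_pow 2 (q 3)).comp_hasFDerivAt q (hasFDerivAt_apply (𝕜 := ℝ) 3 q)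
    refine (((h0.add h1).add h2).add h3).congr_fderiv ?_
    refine ContinuousLinearMap.ext fun v => ?_
    simp only [ContinuousLinearMap.add_apply, ContinuousLinearMap.smul_apply, P_apply, ContinuousLinearMap.proj_apply,
      smul_eq_mul]
    ring
  have h := (Real.hasDerivAt_sqrt hX.ne').comp_hasFDerivAt q hS
  refine h.congr_fderiv ?_
  refine ContinuousLinearMap.ext fun v => ?_
  simp only [nx, ContinuousLinearMap.add_apply, ContinuousLinearMap.smul_apply, P_apply, ContinuousLinearMap.proj_apply,
    smul_eq_mul]
  ring

lemma hasFDerivAt_nt {q : Fin 7 → ℝ} (h : 0 < nt q) :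
    HasFDerivAt nt ((nt q)⁻¹ • (q 4 • P 4 + q 5 • P 5 + q 6 • P 6)) q := by
  have hX : 0 < q 4 ^ 2 + q 5 ^ 2 + q 6 ^ 2 := Real.sqrt_pos.mp h
  have hS : HasFDerivAt (fun q : Fin 7 → ℝ => q 4 ^ 2 + q 5 ^ 2 + q 6 ^ 2)
      ((2 * q 4) • P 4 + (2 * q 5) • P 5 + (2 * q 6) • P 6) q := by
    have h4 := (hasDerivAt_pow 2 (q 4)).comp_hasFDerivAt q (hasFDerivAt_apply (𝕜 := ℝ) 4 q)
    have h5 := (hasDerivAt_pow 2 (q 5)).comp_hasFDerivAt q (hasFDerivAt_apply (𝕜 := ℝ) 5 q)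
    have h6 := (hasDerivAt_pow 2 (q 6)).comp_hasFDerivAt q (hasFDerivAt_apply (𝕜 := ℝ) 6 q)
    refine ((h4.add h5).add h6).congr_fderiv ?_
    refine ContinuousLinearMap.ext fun v => ?_
    simp only [ContinuousLinearMap.add_apply, ContinuousLinearMap.smul_apply, P_apply, ContinuousLinearMap.proj_apply,
      smul_eq_mul]
    ring
  have h := (Real.hasDerivAt_sqrt hX.ne').comp_hasFDerivAt q hS
  refine h.congr_fderiv ?_
  refine ContinuousLinearMap.ext fun v => ?_
  simp only [nt, ContinuousLinearMap.add_apply, ContinuousLinearMap.smul_apply, P_apply, ContinuousLinearMap.proj_apply,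
    smul_eq_mul]
  ring


@[simp] lemma xiVF_0_0 (p : Fin 7 → ℝ) : xiVF 0 p 0 = 1 := rfl
@[simp] lemma xiVF_0_1 (p : Fin 7 → ℝ) : xiVF 0 p 1 = 0 := rfl
@[simp] lemma xiVF_0_2 (p : Fin 7 → ℝ) : xiVF 0 p 2 = 0 := rfl
@[simp] lemma xiVF_0_3 (p : Fin 7 → ℝ) : xiVF 0 p 3 = 0 := rfl
@[simp] lemma xiVF_0_4 (p : Fin 7 → ℝ) : xiVF 0 p 4 = 2*p 1 := rfl
@[simp] lemma xiVF_0_5 (p : Fin 7 → ℝ) : xiVF 0 p 5 = 2*p 2 := rfl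
@[simp] lemma xiVF_0_6 (p : Fin 7 → ℝ) : xiVF 0 p 6 = 2*p 3 := rfl
@[simp] lemma xiVF_1_0 (p : Fin 7 → ℝ) : xiVF 1 p 0 = 0 := rfl
@[simp] lemma xiVF_1_1 (p : Fin 7 → ℝ) : xiVF 1 p 1 = 1 := rfl
@[simp] lemma xiVF_1_2 (p : Fin 7 → ℝ) : xiVF 1 p 2 = 0 := rfl
@[simp] lemma xiVF_1_3 (p : Fin 7 → ℝ) : xiVF 1 p 3 = 0 := rfl
@[simp] lemma xiVF_1_4 (p : Fin 7 → ℝ) : xiVF 1 p 4 = (-2) * p 0 := rfl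
@[simp] lemma xiVF_1_5 (p : Fin 7 → ℝ) : xiVF 1 p 5 = (-2) * p 3 := rfl
@[simp] lemma xiVF_1_6 (p : Fin 7 → ℝ) : xiVF 1 p 6 = 2*p 2 := rfl
@[simp] lemma xiVF_2_0 (p : Fin 7 → ℝ) : xiVF 2 p 0 = 0 := rfl
@[simp] lemma xiVF_2_1 (p : Fin 7 → ℝ) : xiVF 2 p 1 = 0 := rfl
@[simp] lemma xiVF_2_2 (p : Fin 7 → ℝ) : xiVF 2 p 2 = 1 := rfl
@[simp] lemma xiVF_2_3 (p : Fin 7 → ℝ) : xiVF 2 p 3 = 0 := rfl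
@[simp] lemma xiVF_2_4 (p : Fin 7 → ℝ) : xiVF 2 p 4 = 2*p 3 := rfl
@[simp] lemma xiVF_2_5 (p : Fin 7 → ℝ) : xiVF 2 p 5 = (-2) * p 0 := rfl
@[simp] lemma xiVF_2_6 (p : Fin 7 → ℝ) : xiVF 2 p 6 = (-2) * p 1 := rfl
@[simp] lemma xiVF_3_0 (p : Fin 7 → ℝ) : xiVF 3 p 0 = 0 := rfl
@[simp] lemma xiVF_3_1 (p : Fin 7 → ℝ) : xiVF 3 p 1 = 0 := rfl
@[simp] lemma xiVF_3_2 (p : Fin 7 → ℝ) : xiVF 3 p 2 = 0 := rfl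
@[simp] lemma xiVF_3_3 (p : Fin 7 → ℝ) : xiVF 3 p 3 = 1 := rfl
@[simp] lemma xiVF_3_4 (p : Fin 7 → ℝ) : xiVF 3 p 4 = (-2) * p 2 := rfl
@[simp] lemma xiVF_3_5 (p : Fin 7 → ℝ) : xiVF 3 p 5 = 2*p 1 := rfl
@[simp] lemma xiVF_3_6 (p : Fin 7 → ℝ) : xiVF 3 p 6 = (-2) * p 0 := rfl

lemma master (f : ℝ → ℝ) (p : Fin 7 → ℝ) (c2 : ℝ)
    (hf2 : HasDerivAt (deriv f) c2 (nx p))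
    (hR : 0 < nx p) (hT : 0 < nt p)
    (ε1 ε2 ε3 : ℝ) (j1 j2 j3 k : Fin 7) (v : Fin 7 → ℝ) :
    fderiv ℝ (fun q => (ε1 * q j1 * q 4 + ε2 * q j2 * q 5 + ε3 * q j3 * q 6) * (nt q)⁻¹
        - deriv f (nx q) * q k * (nx q)⁻¹) p v
    = (ε1 * (v j1 * p 4 + p j1 * v 4) + ε2 * (v j2 * p 5 + p j2 * v 5)
          + ε3 * (v j3 * p 6 + p j3 * v 6)) / nt p
      - (ε1 * p j1 * p 4 + ε2 * p j2 * p 5 + ε3 * p j3 * p 6)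
          * (p 4 * v 4 + p 5 * v 5 + p 6 * v 6) / nt p ^ 3
      - (c2 * ((p 0 * v 0 + p 1 * v 1 + p 2 * v 2 + p 3 * v 3) / nx p) * p k
          + deriv f (nx p) * v k) / nx p
      + deriv f (nx p) * p k * (p 0 * v 0 + p 1 * v 1 + p 2 * v 2 + p 3 * v 3) / nx p ^ 3 := by
  have hnx := hasFDerivAt_nx hR
  have hnt := hasFDerivAt_nt hT
  have hinvnt : HasFDerivAt (fun q => (nt q)⁻¹)
      ((-(nt p ^ 2)⁻¹) • ((nt p)⁻¹ • (p 4 • P 4 + p 5 • P 5 + p 6 • P 6))) p :=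
    (hasDerivAt_inv hT.ne').comp_hasFDerivAt p hnt
  have hinvnx : HasFDerivAt (fun q => (nx q)⁻¹)
      ((-(nx p ^ 2)⁻¹) • ((nx p)⁻¹ • (p 0 • P 0 + p 1 • P 1 + p 2 • P 2 + p 3 • P 3))) p :=
    (hasDerivAt_inv hR.ne').comp_hasFDerivAt p hnx
  have hN : HasFDerivAt (fun q : Fin 7 → ℝ => ε1 * q j1 * q 4 + ε2 * q j2 * q 5 + ε3 * q j3 * q 6)
      _ p :=
    ((((hasFDerivAt_apply (𝕜 := ℝ) j1 p).const_mul ε1).mul (hasFDerivAt_apply (𝕜 := ℝ) 4 p)).add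
      (((hasFDerivAt_apply (𝕜 := ℝ) j2 p).const_mul ε2).mul (hasFDerivAt_apply (𝕜 := ℝ) 5 p))).add
      (((hasFDerivAt_apply (𝕜 := ℝ) j3 p).const_mul ε3).mul (hasFDerivAt_apply (𝕜 := ℝ) 6 p))
  have hdf : HasFDerivAt (fun q => deriv f (nx q))
      (c2 • ((nx p)⁻¹ • (p 0 • P 0 + p 1 • P 1 + p 2 • P 2 + p 3 • P 3))) p :=
    hf2.comp_hasFDerivAt p hnx
  have hG := (hN.mul hinvnt).sub ((hdf.mul (hasFDerivAt_apply (𝕜 := ℝ) k p)).mul hinvnx)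
  erw [hG.fderiv]
  simp only [ContinuousLinearMap.sub_apply, ContinuousLinearMap.add_apply,
    ContinuousLinearMap.smul_apply, P_apply, smul_eq_mul, ContinuousLinearMap.proj_apply, Pi.mul_apply]
  field_simp
  ring


/-- For `u(x,t) = ‖t‖ − f(‖x‖)`, at points with `r = ‖x‖ > 0` in the domain of `f`
and `‖t‖ > 0`, the horizontal Laplacian is
`Σᵢ ξᵢ(ξᵢu) = −f″(r) − 3f′(r)/r + 8r²/‖t‖`. -/
theorem horizontal_laplacian_rotational
    (s : Set ℝ) (hs : IsOpen s) (hsord : s.OrdConnected) (hsub : s ⊆ Ioi 0)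
    (f : ℝ → ℝ) (hf : ContDiffOn ℝ 2 f s)
    (p : Fin 7 → ℝ) (hr : nx p ∈ s) (htpos : 0 < nt p) :
    ∑ i : Fin 4, xiD i (fun q => xiD i (fun q' => nt q' - f (nx q')) q) p =
      -(deriv (deriv f) (nx p)) - 3 * deriv f (nx p) / nx p +
        8 * nx p ^ 2 / nt p := by
  have hR : 0 < nx p := hsub hr
  have hdf2 : HasDerivAt (deriv f) (deriv (deriv f) (nx p)) (nx p) := by
    have h1 : ContDiffOn ℝ 1 (deriv f) s :=
      hf.deriv_of_isOpen hs (by norm_num)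
    exact ((h1.differentiableOn one_ne_zero).differentiableAt (hs.mem_nhds hr)).hasDerivAt
  have hcont_nx : Continuous nx := by unfold nx; fun_prop
  have hcont_nt : Continuous nt := by unfold nt; fun_prop
  have hmem : {q : Fin 7 → ℝ | nx q ∈ s ∧ 0 < nt q} ∈ nhds p :=
    ((hs.preimage hcont_nx).inter (isOpen_lt continuous_const hcont_nt)).mem_nhds ⟨hr, htpos⟩
  have hu : ∀ q : Fin 7 → ℝ, nx q ∈ s → 0 < nt q →
      HasFDerivAt (fun q' => nt q' - f (nx q'))
        ((nt q)⁻¹ • (q 4 • P 4 + q 5 • P 5 + q 6 • P 6)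
          - deriv f (nx q) • ((nx q)⁻¹ • (q 0 • P 0 + q 1 • P 1 + q 2 • P 2 + q 3 • P 3))) q := by
    intro q hq ht
    have hdfq : HasDerivAt f (deriv f (nx q)) (nx q) :=
      ((hf.differentiableOn (by norm_num)).differentiableAt (hs.mem_nhds hq)).hasDerivAt
    exact (hasFDerivAt_nt ht).sub (hdfq.comp_hasFDerivAt q (hasFDerivAt_nx (hsub hq)))
  have hEq0 : (fun q => fderiv ℝ (fun q' => nt q' - f (nx q')) q (xiVF 0 q)) =ᶠ[nhds p]
      (fun q => ((2:ℝ) * q 1 * q 4 + (2:ℝ) * q 2 * q 5 + (2:ℝ) * q 3 * q 6) * (nt q)⁻¹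
        - deriv f (nx q) * q 0 * (nx q)⁻¹) := by
    filter_upwards [hmem] with q hq
    rw [(hu q hq.1 hq.2).fderiv]
    simp only [ContinuousLinearMap.sub_apply, ContinuousLinearMap.add_apply,
      ContinuousLinearMap.smul_apply, P_apply, smul_eq_mul, xiVF_0_0, xiVF_0_1, xiVF_0_2,
      xiVF_0_3, xiVF_0_4, xiVF_0_5, xiVF_0_6]
    ring
  have hEq1 : (fun q => fderiv ℝ (fun q' => nt q' - f (nx q')) q (xiVF 1 q)) =ᶠ[nhds p]
      (fun q => ((-2:ℝ) * q 0 * q 4 + (-2:ℝ) * q 3 * q 5 + (2:ℝ) * q 2 * q 6) * (nt q)⁻¹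
        - deriv f (nx q) * q 1 * (nx q)⁻¹) := by
    filter_upwards [hmem] with q hq
    rw [(hu q hq.1 hq.2).fderiv]
    simp only [ContinuousLinearMap.sub_apply, ContinuousLinearMap.add_apply,
      ContinuousLinearMap.smul_apply, P_apply, smul_eq_mul, xiVF_1_0, xiVF_1_1, xiVF_1_2,
      xiVF_1_3, xiVF_1_4, xiVF_1_5, xiVF_1_6]
    ring
  have hEq2 : (fun q => fderiv ℝ (fun q' => nt q' - f (nx q')) q (xiVF 2 q)) =ᶠ[nhds p]
      (fun q => ((2:ℝ) * q 3 * q 4 + (-2:ℝ) * q 0 * q 5 + (-2:ℝ) * q 1 * q 6) * (nt q)⁻¹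
        - deriv f (nx q) * q 2 * (nx q)⁻¹) := by
    filter_upwards [hmem] with q hq
    rw [(hu q hq.1 hq.2).fderiv]
    simp only [ContinuousLinearMap.sub_apply, ContinuousLinearMap.add_apply,
      ContinuousLinearMap.smul_apply, P_apply, smul_eq_mul, xiVF_2_0, xiVF_2_1, xiVF_2_2,
      xiVF_2_3, xiVF_2_4, xiVF_2_5, xiVF_2_6]
    ring
  have hEq3 : (fun q => fderiv ℝ (fun q' => nt q' - f (nx q')) q (xiVF 3 q)) =ᶠ[nhds p]
      (fun q => ((-2:ℝ) * q 2 * q 4 + (2:ℝ) * q 1 * q 5 + (-2:ℝ) * q 0 * q 6) * (nt q)⁻¹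
        - deriv f (nx q) * q 3 * (nx q)⁻¹) := by
    filter_upwards [hmem] with q hq
    rw [(hu q hq.1 hq.2).fderiv]
    simp only [ContinuousLinearMap.sub_apply, ContinuousLinearMap.add_apply,
      ContinuousLinearMap.smul_apply, P_apply, smul_eq_mul, xiVF_3_0, xiVF_3_1, xiVF_3_2,
      xiVF_3_3, xiVF_3_4, xiVF_3_5, xiVF_3_6]
    ring
  simp only [xiD]
  rw [Fin.sum_univ_four, hEq0.fderiv_eq, hEq1.fderiv_eq, hEq2.fderiv_eq, hEq3.fderiv_eq,
    master f p _ hdf2 hR htpos (2:ℝ) (2:ℝ) (2:ℝ) 1 2 3 0 (xiVF 0 p),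
    master f p _ hdf2 hR htpos (-2:ℝ) (-2:ℝ) (2:ℝ) 0 3 2 1 (xiVF 1 p),
    master f p _ hdf2 hR htpos (2:ℝ) (-2:ℝ) (-2:ℝ) 3 0 1 2 (xiVF 2 p),
    master f p _ hdf2 hR htpos (-2:ℝ) (2:ℝ) (-2:ℝ) 2 1 0 3 (xiVF 3 p)]
  simp only [xiVF_0_0, xiVF_0_1, xiVF_0_2, xiVF_0_3, xiVF_0_4, xiVF_0_5, xiVF_0_6,
    xiVF_1_0, xiVF_1_1, xiVF_1_2, xiVF_1_3, xiVF_1_4, xiVF_1_5, xiVF_1_6,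
    xiVF_2_0, xiVF_2_1, xiVF_2_2, xiVF_2_3, xiVF_2_4, xiVF_2_5, xiVF_2_6,
    xiVF_3_0, xiVF_3_1, xiVF_3_2, xiVF_3_3, xiVF_3_4, xiVF_3_5, xiVF_3_6]
  have hR2 : nx p ^ 2 = p 0 ^ 2 + p 1 ^ 2 + p 2 ^ 2 + p 3 ^ 2 :=
    Real.sq_sqrt (by positivity)
  have hT2 : nt p ^ 2 = p 4 ^ 2 + p 5 ^ 2 + p 6 ^ 2 :=
    Real.sq_sqrt (by positivity)
  have trans1 : (12 * (p 0 ^ 2 + p 1 ^ 2 + p 2 ^ 2 + p 3 ^ 2) * nt p ^ 2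
        - 4 * (p 0 ^ 2 + p 1 ^ 2 + p 2 ^ 2 + p 3 ^ 2) * (p 4 ^ 2 + p 5 ^ 2 + p 6 ^ 2)) / nt p ^ 3
      - deriv (deriv f) (nx p) * (p 0 ^ 2 + p 1 ^ 2 + p 2 ^ 2 + p 3 ^ 2) / nx p ^ 2
      - deriv f (nx p) * (4 * nx p ^ 2 - (p 0 ^ 2 + p 1 ^ 2 + p 2 ^ 2 + p 3 ^ 2)) / nx p ^ 3
      = -(deriv (deriv f) (nx p)) - 3 * deriv f (nx p) / nx p + 8 * nx p ^ 2 / nt p := by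
    rw [← hR2, ← hT2]
    field_simp
    ring
  rw [← trans1]
  field_simp
  ring
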